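/- Let u : ℝⁿ → ℝ be Lipschitz with constant L, let γ ∈ (0,1), C₀ > 0, and for each point z in a set S ⊆ ℝⁿ let H_z : ℝⁿ → ℝ be a function such that for all r ∈ (0, 1]: sup_{x ∈ B₁} | u(z + rx)/r − H_z(x) | ≤ C₀·r^γ. Then for all x₀, y₀ ∈ S with 0 < |x₀ − y₀| ≤ 1: sup_{x ∈ B₁} | H_{x₀}(x) − H_{y₀}(x) | ≤ (L + 2C₀)·|x₀ − y₀|^{γ/(1+γ)}. -/

import Mathlib

open Real

/-- Hölder continuity of the blow-up limits (Lemma 5.1): if `u` is `L`-Lipschitz and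
for each `z ∈ S` a function `H_z` satisfies `sup_{B₁}|u(z+rx)/r − H_z(x)| ≤ C₀ r^γ`
for all `0 < r ≤ 1`, then for `x₀, y₀ ∈ S` with `0 < |x₀−y₀| ≤ 1`,
`sup_{B₁}|H_{x₀} − H_{y₀}| ≤ (L + 2C₀)|x₀−y₀|^{γ/(1+γ)}`. -/
theorem stmt13 (n : ℕ) (u : EuclideanSpace ℝ (Fin n) → ℝ) (L γ C₀ : ℝ)
    (hL : 0 < L) (hγ₀ : 0 < γ) (hγ₁ : γ < 1) (hC₀ : 0 < C₀)
    (hlip : ∀ x y : EuclideanSpace ℝ (Fin n), |u x - u y| ≤ L * ‖x - y‖)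
    (S : Set (EuclideanSpace ℝ (Fin n)))
    (H : EuclideanSpace ℝ (Fin n) → EuclideanSpace ℝ (Fin n) → ℝ)
    (h : ∀ z ∈ S, ∀ r : ℝ, 0 < r → r ≤ 1 → ∀ x : EuclideanSpace ℝ (Fin n), ‖x‖ < 1 →
      |u (z + r • x) / r - H z x| ≤ C₀ * r ^ γ) :
    ∀ x₀ ∈ S, ∀ y₀ ∈ S, 0 < ‖x₀ - y₀‖ → ‖x₀ - y₀‖ ≤ 1 →
      ∀ x : EuclideanSpace ℝ (Fin n), ‖x‖ < 1 →
        |H x₀ x - H y₀ x| ≤ (L + 2 * C₀) * ‖x₀ - y₀‖ ^ (γ / (1 + γ)) := by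
  intro x₀ hx₀ y₀ hy₀ hd hd1 x hx
  set d : ℝ := ‖x₀ - y₀‖ with hdd
  have h1γ : (0:ℝ) < 1 + γ := by linarith
  set r : ℝ := d ^ (1 / (1 + γ)) with hr
  have hr0 : 0 < r := Real.rpow_pos_of_pos hd _
  have hr1 : r ≤ 1 := Real.rpow_le_one hd.le hd1 (by positivity)
  have hA := h x₀ hx₀ r hr0 hr1 x hx
  have hB := h y₀ hy₀ r hr0 hr1 x hx
  have hrγ : r ^ γ = d ^ (γ / (1 + γ)) := by
    rw [hr, ← Real.rpow_mul hd.le]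
    congr 1
    ring
  have hdr : d / r = d ^ (γ / (1 + γ)) := by
    have : d / r = d ^ (1 - 1 / (1 + γ)) := by
      rw [Real.rpow_sub hd, Real.rpow_one]
    rw [this]
    congr 1
    field_simp
    ring
  have hmid : |u (x₀ + r • x) / r - u (y₀ + r • x) / r| ≤ L * d ^ (γ / (1 + γ)) := by
    rw [div_sub_div_same, abs_div, abs_of_pos hr0]
    rw [div_le_iff₀ hr0]
    calc |u (x₀ + r • x) - u (y₀ + r • x)| ≤ L * ‖(x₀ + r • x) - (y₀ + r • x)‖ :=
          hlip _ _
      _ = L * d := by rw [hdd]; congr 2; abel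
      _ = L * d ^ (γ / (1 + γ)) * r := by
          rw [mul_assoc, ← hdr, div_mul_cancel₀ _ hr0.ne']
  calc |H x₀ x - H y₀ x|
      ≤ |u (x₀ + r • x) / r - H x₀ x| + |u (x₀ + r • x) / r - u (y₀ + r • x) / r|
        + |u (y₀ + r • x) / r - H y₀ x| := by
        have := abs_sub_le (H x₀ x) (u (x₀ + r • x) / r) (H y₀ x)
        have := abs_sub_le (u (x₀ + r • x) / r) (u (y₀ + r • x) / r) (H y₀ x)
        rw [abs_sub_comm (u (x₀ + r • x) / r) (H x₀ x)] at *
        linarith [abs_sub_le (H x₀ x) (u (x₀ + r • x) / r) (H y₀ x),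
          abs_sub_le (u (x₀ + r • x) / r) (u (y₀ + r • x) / r) (H y₀ x)]
    _ ≤ C₀ * r ^ γ + L * d ^ (γ / (1 + γ)) + C₀ * r ^ γ := by
        linarith
    _ = (L + 2 * C₀) * d ^ (γ / (1 + γ)) := by rw [hrγ]; ring
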